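/- Let η : [0,∞) → ℝ^N be differentiable and satisfy η̇(t) = −L·sat(η(t)), where sat is applied componentwise and L is the Laplacian matrix of G. With 𝑠̄𝑎𝑡(s̄) := sat(s̄ + r/2) − τ_h/2 and V(η) := Σ_{i=1}^N ∫₀^{η_i − r/2} 𝑠̄𝑎𝑡(s̄) ds̄, the function t ↦ V(η(t)) is differentiable with derivative d/dt V(η(t)) = −sat(η(t))ᵀ L sat(η(t)) ≤ 0 for all t ≥ 0. -/

import Mathlib

open Matrix

/-- The linear saturation function with lower bound `τ_l = 0`,
upper bound `τh > 0` and saturation level `r > 0`. -/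
noncomputable def sat (τh r s : ℝ) : ℝ :=
  if s ≤ 0 then 0 else if s < r then τh / r * s else τh

lemma sat_eq (τh r : ℝ) (hτh : 0 < τh) (hr : 0 < r) (s : ℝ) :
    sat τh r s = min τh (τh / r * max s 0) := by
  unfold sat
  have hpos : 0 < τh / r := div_pos hτh hr
  split_ifs with h1 h2
  · rw [max_eq_right h1, mul_zero, min_eq_right hτh.le]
  · rw [max_eq_left (not_le.mp h1).le, min_eq_right]
    rw [div_mul_eq_mul_div, div_le_iff₀ hr]
    nlinarith
  · rw [max_eq_left (not_le.mp h1).le, min_eq_left]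
    rw [div_mul_eq_mul_div, le_div_iff₀ hr]
    nlinarith [not_lt.mp h2]

lemma continuous_sat (τh r : ℝ) (hτh : 0 < τh) (hr : 0 < r) :
    Continuous (sat τh r) := by
  have : (sat τh r) = fun s => min τh (τh / r * max s 0) :=
    funext (sat_eq τh r hτh hr)
  rw [this]
  fun_prop

/-- For `η̇ = −L·sat(η)` with `L` the graph Laplacian, the Lyapunov function
`V(η) = Σ_i ∫₀^{η_i − r/2} (sat(s + r/2) − τh/2) ds` is differentiable along
solutions, with derivative `−sat(η)ᵀ L sat(η) ≤ 0`. -/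
theorem lyapunov_derivative_nonpos (N : ℕ) (G : SimpleGraph (Fin N))
    [DecidableRel G.Adj]
    (τh r : ℝ) (hτh : 0 < τh) (hr : 0 < r)
    (η : ℝ → Fin N → ℝ)
    (hODE : ∀ i : Fin N, ∀ t : ℝ, 0 ≤ t →
      HasDerivAt (fun s => η s i)
        (-(G.lapMatrix ℝ *ᵥ fun j => sat τh r (η t j)) i) t) :
    ∀ t : ℝ, 0 ≤ t →
      HasDerivAt
        (fun s => ∑ i : Fin N,
          ∫ u in (0:ℝ)..(η s i - r / 2), (sat τh r (u + r / 2) - τh / 2))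
        (-((fun j => sat τh r (η t j)) ⬝ᵥ (G.lapMatrix ℝ *ᵥ fun j => sat τh r (η t j)))) t ∧
      -((fun j => sat τh r (η t j)) ⬝ᵥ (G.lapMatrix ℝ *ᵥ fun j => sat τh r (η t j))) ≤ 0 := by
  intro t ht
  set v : Fin N → ℝ := fun j => sat τh r (η t j) with hv
  set w : Fin N → ℝ := G.lapMatrix ℝ *ᵥ v with hw
  set g : ℝ → ℝ := fun u => sat τh r (u + r / 2) - τh / 2 with hg
  have hgc : Continuous g := by
    apply Continuous.sub _ continuous_const
    exact (continuous_sat τh r hτh hr).comp (continuous_id.add continuous_const)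
  -- column sums of L vanish
  have hsum : ∑ i, w i = 0 := by
    have h1 : G.lapMatrix ℝ *ᵥ (fun _ => (1:ℝ)) = 0 :=
      G.lapMatrix_mulVec_const_eq_zero
    calc ∑ i, w i = ∑ i, ∑ j, G.lapMatrix ℝ i j * v j := by
          simp [hw, mulVec, dotProduct]
      _ = ∑ j, (∑ i, G.lapMatrix ℝ i j) * v j := by
          rw [Finset.sum_comm]; simp [Finset.sum_mul]
      _ = 0 := by
          apply Finset.sum_eq_zero
          intro j _
          have : ∑ i, G.lapMatrix ℝ i j = 0 := by
            have := congrFun h1 j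
            simp only [mulVec, dotProduct, mul_one, Pi.zero_apply] at this
            calc ∑ i, G.lapMatrix ℝ i j = ∑ i, G.lapMatrix ℝ j i := by
                  apply Finset.sum_congr rfl; intro i _
                  exact congrFun (congrFun (G.isSymm_lapMatrix (R := ℝ)) j) i
              _ = 0 := this
          rw [this, zero_mul]
  -- derivative of each summand
  have hderiv : ∀ i : Fin N,
      HasDerivAt (fun s => ∫ u in (0:ℝ)..(η s i - r / 2), g u)
        (g (η t i - r / 2) * (-(w i))) t := by
    intro i
    have hint : HasDerivAt (fun x => ∫ u in (0:ℝ)..x, g u) (g (η t i - r / 2))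
        (η t i - r / 2) := by
      apply intervalIntegral.integral_hasDerivAt_right
        (hgc.intervalIntegrable _ _)
        hgc.aestronglyMeasurable.stronglyMeasurableAtFilter
        hgc.continuousAt
    have hη : HasDerivAt (fun s => η s i - r / 2) (-(w i)) t :=
      (hODE i t ht).sub_const (r / 2)
    exact hint.comp t hη
  have hVg : ∀ i, g (η t i - r / 2) = v i - τh / 2 := by
    intro i; simp [hg, hv]
  have hsumderiv : HasDerivAt
      (fun s => ∑ i : Fin N, ∫ u in (0:ℝ)..(η s i - r / 2), g u)
      (∑ i : Fin N, g (η t i - r / 2) * (-(w i))) t :=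
    HasDerivAt.fun_sum fun i _ => hderiv i
  have hkey : ∑ i : Fin N, g (η t i - r / 2) * (-(w i)) = -(v ⬝ᵥ w) := by
    simp only [hVg]
    have : ∑ i : Fin N, (v i - τh / 2) * (-(w i))
        = -(∑ i, v i * w i) + (τh / 2) * ∑ i, w i := by
      rw [Finset.mul_sum, ← Finset.sum_neg_distrib, ← Finset.sum_add_distrib]
      apply Finset.sum_congr rfl; intro i _; ring
    rw [this, hsum, mul_zero, add_zero, dotProduct]
  constructor
  · rw [← hkey]; exact hsumderiv
  · have hpsd := (G.posSemidef_lapMatrix (R := ℝ)).dotProduct_mulVec_nonneg v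
    rw [star_trivial] at hpsd
    simpa using neg_nonpos_of_nonneg hpsd
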